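/- If G and G′ are graphs with the same adjacency spectrum (cospectral), and H is an arbitrary graph, then G ⋆ H and G′ ⋆ H have the same adjacency spectrum. -/

import Mathlib

open Matrix Polynomial BigOperators Kronecker

/-- The neighbourhood corona `G₁ ⋆ G₂` of two simple graphs. -/
def ncorona {V₁ V₂ : Type*} (G₁ : SimpleGraph V₁) (G₂ : SimpleGraph V₂) :
    SimpleGraph (V₁ ⊕ V₁ × V₂) where
  Adj := fun a b =>
    match a, b with
    | Sum.inl v, Sum.inl w => G₁.Adj v w
    | Sum.inl v, Sum.inr iu => G₁.Adj v iu.1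
    | Sum.inr iu, Sum.inl w => G₁.Adj w iu.1
    | Sum.inr iu, Sum.inr jw => iu.1 = jw.1 ∧ G₂.Adj iu.2 jw.2
  symm := ⟨by
    rintro (v | ⟨i, u⟩) (w | ⟨j, z⟩) h
    · exact G₁.adj_symm h
    · exact h
    · exact h
    · exact ⟨h.1.symm, G₂.adj_symm h.2⟩⟩
  loopless := ⟨by
    rintro (v | ⟨i, u⟩) h
    · exact G₁.loopless.irrefl v h
    · exact G₂.loopless.irrefl u h.2⟩

noncomputable instance {V₁ V₂ : Type*} (G₁ : SimpleGraph V₁) (G₂ : SimpleGraph V₂) :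
    DecidableRel (ncorona G₁ G₂).Adj := Classical.decRel _

/-- The `M`-coronal `Γ_M(x) = 1ᵀ (xI - M)⁻¹ 1`, the sum of the entries of `(xI - M)⁻¹`. -/
noncomputable def coronal {n : Type*} [Fintype n] [DecidableEq n]
    (M : Matrix n n ℝ) (x : ℝ) : ℝ :=
  ∑ i, ∑ j, (x • (1 : Matrix n n ℝ) - M)⁻¹ i j


section Aux
variable {R : Type*} [CommRing R]

lemma my_charpoly_conj {n : Type*} [Fintype n] [DecidableEq n]
    (P Q M : Matrix n n R) (h1 : P * Q = 1) (h2 : Q * P = 1) :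
    (P * M * Q).charpoly = M.charpoly := by
  have hPQ : P.map (C : R →+* R[X]) * Q.map (C : R →+* R[X]) = 1 := by
    rw [← Matrix.map_mul, h1, Matrix.map_one _ (map_zero C) (map_one C)]
  have key : charmatrix (P * M * Q) = P.map C * charmatrix M * Q.map C := by
    unfold charmatrix
    simp only [RingHom.mapMatrix_apply]
    rw [Matrix.mul_sub, Matrix.sub_mul, ← Matrix.map_mul, ← Matrix.map_mul]
    congr 1
    rw [← (Matrix.scalar_commute (X : R[X]) (fun r => Commute.all X r) (P.map C)).eq,
      mul_assoc, hPQ, mul_one]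
  rw [Matrix.charpoly, Matrix.charpoly, key, det_mul, det_mul, mul_right_comm,
    ← det_mul, hPQ, det_one, one_mul]

lemma my_charpoly_conj_equiv {n m : Type*} [Fintype n] [Fintype m] [DecidableEq n] [DecidableEq m]
    (e : n ≃ m) (P : Matrix m n R) (Q : Matrix n m R) (M : Matrix n n R)
    (h1 : P * Q = 1) (h2 : Q * P = 1) :
    (P * M * Q).charpoly = M.charpoly := by
  have hPQ' : P.submatrix id ⇑e.symm * Q.submatrix ⇑e.symm id = 1 := by
    rw [Matrix.submatrix_mul_equiv P Q id e.symm id, h1, Matrix.submatrix_id_id]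
  have hQP' : Q.submatrix ⇑e.symm id * P.submatrix id ⇑e.symm = 1 := by
    have h := Matrix.submatrix_mul_equiv Q P ⇑e.symm (Equiv.refl m) ⇑e.symm
    rw [Equiv.coe_refl] at h
    rw [h, h2, Matrix.submatrix_one_equiv]
  have key : (P.submatrix id ⇑e.symm) * (M.submatrix ⇑e.symm ⇑e.symm) * (Q.submatrix ⇑e.symm id)
      = P * M * Q := by
    rw [Matrix.submatrix_mul_equiv P M id e.symm ⇑e.symm,
      Matrix.submatrix_mul_equiv (P * M) Q id e.symm id, Matrix.submatrix_id_id]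
  calc (P * M * Q).charpoly
      = ((P.submatrix id ⇑e.symm) * (M.submatrix ⇑e.symm ⇑e.symm) *
          (Q.submatrix ⇑e.symm id)).charpoly := by rw [key]
    _ = (M.submatrix ⇑e.symm ⇑e.symm).charpoly := my_charpoly_conj _ _ _ hPQ' hQP'
    _ = M.charpoly := by rw [← Matrix.reindex_apply, Matrix.charpoly_reindex]

lemma my_charpoly_diagonal {n : Type*} [Fintype n] [DecidableEq n] (d : n → R) :
    (Matrix.diagonal d).charpoly = ∏ i, (X - C (d i)) := by
  have h : charmatrix (Matrix.diagonal d) = Matrix.diagonal fun i => X - C (d i) := by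
    ext i j
    by_cases h : i = j
    · subst h; simp
    · rw [charmatrix_apply_ne _ _ _ h, Matrix.diagonal_apply_ne _ h,
        Matrix.diagonal_apply_ne _ h, map_zero, neg_zero]
  rw [Matrix.charpoly, h, det_diagonal]

end Aux

lemma my_charpoly_isHermitian {n : Type*} [Fintype n] [DecidableEq n] {A : Matrix n n ℝ}
    (hA : A.IsHermitian) : A.charpoly = ∏ i, (X - C (hA.eigenvalues i)) := by
  have hU1 : (hA.eigenvectorUnitary : Matrix n n ℝ) * star (hA.eigenvectorUnitary : Matrix n n ℝ)
      = 1 := mem_unitaryGroup_iff.mp hA.eigenvectorUnitary.2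
  have hU2 : star (hA.eigenvectorUnitary : Matrix n n ℝ) * (hA.eigenvectorUnitary : Matrix n n ℝ)
      = 1 := mem_unitaryGroup_iff'.mp hA.eigenvectorUnitary.2
  conv_lhs => rw [hA.spectral_theorem, Unitary.conjStarAlgAut_apply]
  rw [my_charpoly_conj _ _ _ hU1 hU2, my_charpoly_diagonal]
  exact Finset.prod_congr rfl fun i _ => by
    simp [RCLike.ofReal_real_eq_id]

lemma my_multiset_eq {V V' : Type*} [Fintype V] [Fintype V'] (f : V → ℝ) (g : V' → ℝ)
    (h : ∏ i, (X - C (f i)) = ∏ j, (X - C (g j))) :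
    Finset.univ.val.map f = Finset.univ.val.map g := by
  have h1 : ((Finset.univ.val.map f).map fun a => X - C a).prod
      = ((Finset.univ.val.map g).map fun a => X - C a).prod := by
    rw [Multiset.map_map, Multiset.map_map]
    exact h
  calc Finset.univ.val.map f
      = ((Finset.univ.val.map f).map fun a => X - C a).prod.roots :=
        (roots_multiset_prod_X_sub_C _).symm
    _ = ((Finset.univ.val.map g).map fun a => X - C a).prod.roots := by rw [h1]
    _ = Finset.univ.val.map g := roots_multiset_prod_X_sub_C _

lemma my_map_univ_comp {A V : Type*} [Fintype A] [Fintype V] (e : A ≃ V) (f : V → ℝ) :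
    Finset.univ.val.map (fun a => f (e a)) = Finset.univ.val.map f := by
  have h2 : Finset.univ.val.map ⇑e = Finset.univ.val := by
    have h3 := congrArg Finset.val (Finset.map_univ_equiv e)
    rwa [Finset.map_val, Equiv.coe_toEmbedding] at h3
  calc Finset.univ.val.map (fun a => f (e a))
      = (Finset.univ.val.map ⇑e).map f := by rw [Multiset.map_map]; rfl
    _ = Finset.univ.val.map f := by rw [h2]

lemma my_mono_eq {n : ℕ} (f g : Fin n → ℝ) (hf : Monotone f) (hg : Monotone g)
    (h : Finset.univ.val.map f = Finset.univ.val.map g) : f = g := by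
  have hl : (↑(List.ofFn f) : Multiset ℝ) = (↑(List.ofFn g) : Multiset ℝ) := by
    rw [List.ofFn_eq_map, List.ofFn_eq_map, ← Multiset.map_coe, ← Multiset.map_coe]
    exact h
  exact List.ofFn_injective
    (List.Perm.eq_of_sortedLE hf.sortedLE_ofFn hg.sortedLE_ofFn (Multiset.coe_eq_coe.mp hl))

lemma my_exists_equiv {V V' : Type*} [Fintype V] [Fintype V'] (f : V → ℝ) (g : V' → ℝ)
    (h : Finset.univ.val.map f = Finset.univ.val.map g) :
    ∃ e : V ≃ V', ∀ v, g (e v) = f v := by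
  have hcard : Fintype.card V' = Fintype.card V := by
    have h' := congrArg Multiset.card h
    simpa using h'.symm
  set n := Fintype.card V with hn
  let eV : V ≃ Fin n := Fintype.equivFin V
  let eV' : V' ≃ Fin n := Fintype.equivFinOfCardEq hcard
  set f₀ : Fin n → ℝ := fun i => f (eV.symm i) with hf₀
  set g₀ : Fin n → ℝ := fun i => g (eV'.symm i) with hg₀
  have hm0 : Finset.univ.val.map f₀ = Finset.univ.val.map g₀ := by
    rw [hf₀, hg₀, my_map_univ_comp eV.symm f, my_map_univ_comp eV'.symm g]
    exact h
  set σ : Equiv.Perm (Fin n) := Tuple.sort f₀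
  set σ' : Equiv.Perm (Fin n) := Tuple.sort g₀
  have h1 : f₀ ∘ σ = g₀ ∘ σ' := by
    apply my_mono_eq _ _ (Tuple.monotone_sort f₀) (Tuple.monotone_sort g₀)
    calc Finset.univ.val.map (f₀ ∘ ⇑σ) = Finset.univ.val.map f₀ := my_map_univ_comp σ f₀
      _ = Finset.univ.val.map g₀ := hm0
      _ = Finset.univ.val.map (g₀ ∘ ⇑σ') := (my_map_univ_comp σ' g₀).symm
  refine ⟨eV.trans (σ.symm.trans (σ'.trans eV'.symm)), fun v => ?_⟩
  have h2 := congrFun h1 (σ.symm (eV v))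
  simp only [Function.comp_apply, Equiv.apply_symm_apply, hf₀, hg₀] at h2
  simpa [Equiv.trans_apply] using h2.symm

lemma my_exists_PQ {V V' : Type*} [Fintype V] [Fintype V'] [DecidableEq V] [DecidableEq V']
    {A : Matrix V V ℝ} {A' : Matrix V' V' ℝ} (hA : A.IsHermitian) (hA' : A'.IsHermitian)
    (h : A.charpoly = A'.charpoly) :
    ∃ (e : V ≃ V') (P : Matrix V' V ℝ) (Q : Matrix V V' ℝ),
      P * Q = 1 ∧ Q * P = 1 ∧ P * A * Q = A' := by
  have hprod : ∏ i, (X - C (hA.eigenvalues i)) = ∏ j, (X - C (hA'.eigenvalues j)) :=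
    (my_charpoly_isHermitian hA).symm.trans (h.trans (my_charpoly_isHermitian hA'))
  obtain ⟨e, he⟩ := my_exists_equiv _ _ (my_multiset_eq _ _ hprod)
  set U : Matrix V V ℝ := (hA.eigenvectorUnitary : Matrix V V ℝ) with hU
  set U' : Matrix V' V' ℝ := (hA'.eigenvectorUnitary : Matrix V' V' ℝ) with hU'
  have hU1 : U * star U = 1 := mem_unitaryGroup_iff.mp hA.eigenvectorUnitary.2
  have hU2 : star U * U = 1 := mem_unitaryGroup_iff'.mp hA.eigenvectorUnitary.2
  have hU'1 : U' * star U' = 1 := mem_unitaryGroup_iff.mp hA'.eigenvectorUnitary.2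
  have hU'2 : star U' * U' = 1 := mem_unitaryGroup_iff'.mp hA'.eigenvectorUnitary.2
  refine ⟨e, U' * (star U).submatrix ⇑e.symm id, U.submatrix id ⇑e.symm * star U', ?_, ?_, ?_⟩
  · -- P * Q = 1
    have hmid : (star U).submatrix ⇑e.symm id * U.submatrix id ⇑e.symm = 1 := by
      have hs := Matrix.submatrix_mul_equiv (star U) U ⇑e.symm (Equiv.refl V) ⇑e.symm
      rw [Equiv.coe_refl] at hs
      rw [hs, hU2, Matrix.submatrix_one_equiv]
    simp only [Matrix.mul_assoc]
    rw [← Matrix.mul_assoc ((star U).submatrix ⇑e.symm id), hmid, Matrix.one_mul, hU'1]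
  · -- Q * P = 1
    have hmid : U.submatrix id ⇑e.symm * (star U).submatrix ⇑e.symm id = 1 := by
      rw [Matrix.submatrix_mul_equiv U (star U) id e.symm id, hU1, Matrix.submatrix_id_id]
    simp only [Matrix.mul_assoc]
    rw [← Matrix.mul_assoc (star U') U', hU'2, Matrix.one_mul, hmid]
  · -- P * A * Q = A'
    have hd : star U * A * U = Matrix.diagonal (RCLike.ofReal ∘ hA.eigenvalues) :=
      by have := hA.conjStarAlgAut_star_eigenvectorUnitary; rw [Unitary.conjStarAlgAut_star_apply] at this; exact this
    have hd' : star U' * A' * U' = Matrix.diagonal (RCLike.ofReal ∘ hA'.eigenvalues) :=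
      by have := hA'.conjStarAlgAut_star_eigenvectorUnitary; rw [Unitary.conjStarAlgAut_star_apply] at this; exact this
    have harg : ((RCLike.ofReal ∘ hA.eigenvalues : V → ℝ)) ∘ ⇑e.symm
        = ((RCLike.ofReal ∘ hA'.eigenvalues : V' → ℝ)) := by
      funext v'
      simp only [Function.comp_apply, RCLike.ofReal_real_eq_id, id_eq]
      have h6 := he (e.symm v')
      rw [Equiv.apply_symm_apply] at h6
      exact h6.symm
    have hmid : (star U).submatrix ⇑e.symm id * A * U.submatrix id ⇑e.symm
        = star U' * A' * U' := by
      have hs1 := Matrix.submatrix_mul_equiv (star U) A ⇑e.symm (Equiv.refl V) id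
      rw [Equiv.coe_refl, Matrix.submatrix_id_id] at hs1
      have hs2 := Matrix.submatrix_mul_equiv (star U * A) U ⇑e.symm (Equiv.refl V) ⇑e.symm
      rw [Equiv.coe_refl] at hs2
      rw [hs1, hs2, hd, hd', Matrix.submatrix_diagonal_equiv, harg]
    simp only [Matrix.mul_assoc] at hmid ⊢
    rw [← Matrix.mul_assoc A (U.submatrix id ⇑e.symm) (star U'),
      ← Matrix.mul_assoc ((star U).submatrix ⇑e.symm id) (A * U.submatrix id ⇑e.symm) (star U')]
    rw [show (star U).submatrix ⇑e.symm id * (A * U.submatrix id ⇑e.symm)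
          = star U' * (A' * U') from hmid]
    rw [Matrix.mul_assoc (star U') (A' * U') (star U'), Matrix.mul_assoc A' U' (star U'),
      hU'1, Matrix.mul_one, ← Matrix.mul_assoc U' (star U') A', hU'1, Matrix.one_mul]
section Blocks
variable {V V' W : Type*} [Fintype V] [Fintype V'] [Fintype W]
  [DecidableEq V] [DecidableEq V'] [DecidableEq W]

variable (W) in
def bmat {a b : Type*} (M : Matrix a b ℝ) : Matrix a (b × W) ℝ := Matrix.of fun v iu => M v iu.1
variable (W) in
def cmat {a b : Type*} (M : Matrix a b ℝ) : Matrix (a × W) b ℝ := Matrix.of fun iu v => M iu.1 v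

lemma my_ncorona_adj (G : SimpleGraph V) (H : SimpleGraph W)
    [DecidableRel G.Adj] [DecidableRel H.Adj] :
    (ncorona G H).adjMatrix ℝ =
      Matrix.fromBlocks (G.adjMatrix ℝ) (bmat W (G.adjMatrix ℝ))
        (cmat W (G.adjMatrix ℝ))
        ((1 : Matrix V V ℝ) ⊗ₖ H.adjMatrix ℝ) := by
  ext a b
  rcases a with v | ⟨i, u⟩ <;> rcases b with w | ⟨j, z⟩ <;>
    simp only [SimpleGraph.adjMatrix_apply] <;>
    simp [ncorona, Matrix.fromBlocks, SimpleGraph.adjMatrix_apply, Matrix.one_apply,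
      SimpleGraph.adj_comm, ite_and, bmat, cmat]
  · congr
  · congr
  by_cases h1 : i = j <;> by_cases h2 : H.Adj u z <;> simp [h1, h2]

-- cross block lemmas
lemma my_mul_B {m n b : Type*} [Fintype m] [Fintype n] (P : Matrix m n ℝ) (M : Matrix n b ℝ) :
    P * bmat W M = bmat W (P * M) := by
  ext v' ⟨j, w⟩
  simp [Matrix.mul_apply, bmat]

lemma my_B_mul {n m a : Type*} [Fintype n] [Fintype m] [DecidableEq W]
    (M : Matrix a n ℝ) (R : Matrix n m ℝ) :
    bmat W M * (R ⊗ₖ (1 : Matrix W W ℝ)) = bmat W (M * R) := by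
  ext v ⟨j', w'⟩
  simp [Matrix.mul_apply, Fintype.sum_prod_type, Matrix.one_apply, mul_ite, Finset.sum_ite_eq',
    Matrix.kroneckerMap_apply, bmat]

lemma my_K_mul_C {n m b : Type*} [Fintype n] [Fintype m] [DecidableEq W]
    (P : Matrix m n ℝ) (M : Matrix n b ℝ) :
    (P ⊗ₖ (1 : Matrix W W ℝ)) * cmat W M = cmat W (P * M) := by
  ext ⟨i', u'⟩ v
  simp [Matrix.mul_apply, Fintype.sum_prod_type, Matrix.one_apply, ite_mul, Finset.sum_ite_eq,
    Matrix.kroneckerMap_apply, cmat]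

lemma my_C_mul {n m a : Type*} [Fintype n] [Fintype m]
    (M : Matrix a n ℝ) (Q : Matrix n m ℝ) :
    cmat W M * Q = cmat W (M * Q) := by
  ext ⟨i, u⟩ v'
  simp [Matrix.mul_apply, cmat]

end Blocks


/-- Corollary 2.4(a): if `G` and `G'` are adjacency cospectral and `H` is arbitrary, then
`G ⋆ H` and `G' ⋆ H` are adjacency cospectral. -/
theorem ncorona_cospectral_left {V V' W : Type*} [Fintype V] [Fintype V'] [Fintype W]
    [DecidableEq V] [DecidableEq V'] [DecidableEq W]
    (G : SimpleGraph V) (G' : SimpleGraph V') (H : SimpleGraph W)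
    [DecidableRel G.Adj] [DecidableRel G'.Adj] [DecidableRel H.Adj]
    (hcos : (G.adjMatrix ℝ).charpoly = (G'.adjMatrix ℝ).charpoly) :
    ((ncorona G H).adjMatrix ℝ).charpoly = ((ncorona G' H).adjMatrix ℝ).charpoly := by
  have hG : (G.adjMatrix ℝ).IsHermitian :=
    ((G.adjMatrix ℝ).conjTranspose_eq_transpose_of_trivial).trans G.transpose_adjMatrix
  have hG' : (G'.adjMatrix ℝ).IsHermitian :=
    ((G'.adjMatrix ℝ).conjTranspose_eq_transpose_of_trivial).trans G'.transpose_adjMatrix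
  obtain ⟨e, P, Q, hPQ, hQP, hPAQ⟩ := my_exists_PQ hG hG' hcos
  set bigP : Matrix (V' ⊕ V' × W) (V ⊕ V × W) ℝ :=
    Matrix.fromBlocks P 0 0 (P ⊗ₖ (1 : Matrix W W ℝ)) with hbigP
  set bigQ : Matrix (V ⊕ V × W) (V' ⊕ V' × W) ℝ :=
    Matrix.fromBlocks Q 0 0 (Q ⊗ₖ (1 : Matrix W W ℝ)) with hbigQ
  have hbig1 : bigP * bigQ = 1 := by
    rw [hbigP, hbigQ, Matrix.fromBlocks_multiply]
    simp only [Matrix.zero_mul, Matrix.mul_zero, add_zero, zero_add,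
      ← Matrix.mul_kronecker_mul, Matrix.one_mul, hPQ, Matrix.one_kronecker_one,
      Matrix.fromBlocks_one]
  have hbig2 : bigQ * bigP = 1 := by
    rw [hbigP, hbigQ, Matrix.fromBlocks_multiply]
    simp only [Matrix.zero_mul, Matrix.mul_zero, add_zero, zero_add,
      ← Matrix.mul_kronecker_mul, Matrix.one_mul, hQP, Matrix.one_kronecker_one,
      Matrix.fromBlocks_one]
  have key : bigP * ((ncorona G H).adjMatrix ℝ) * bigQ = (ncorona G' H).adjMatrix ℝ := by
    rw [my_ncorona_adj G H, my_ncorona_adj G' H, hbigP, hbigQ,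
      Matrix.fromBlocks_multiply, Matrix.fromBlocks_multiply]
    simp only [Matrix.zero_mul, Matrix.mul_zero, add_zero, zero_add,
      my_mul_B, my_B_mul, my_K_mul_C, my_C_mul,
      ← Matrix.mul_kronecker_mul, Matrix.one_mul, Matrix.mul_one, hPAQ, hPQ,
      Matrix.one_kronecker_one]
  have eBig : (V ⊕ V × W) ≃ (V' ⊕ V' × W) :=
    Equiv.sumCongr e (Equiv.prodCongr e (Equiv.refl W))
  rw [← key]
  exact (my_charpoly_conj_equiv eBig bigP bigQ _ hbig1 hbig2).symm
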